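/- Let c : ℕ × ℕ → ℝ satisfy the recurrence c(k, j) = c(k−1, j) + k·c(k−1, j−1) for all integers 1 ≤ k ≤ j. Then for every n ≥ 0, c(n, n) = ∑_{l=0}^{n} e_l(1, 2, …, n) · c(0, n−l), where e_l(1, 2, …, n) = ∑_{1 ≤ k_1 < ⋯ < k_l ≤ n} k_1·k_2⋯k_l is the l-th elementary symmetric polynomial evaluated at (1, 2, …, n), with e_0 = 1. -/

import Mathlib

open Finset

private def Esym (k l : ℕ) : ℝ := ∑ t ∈ (Finset.Icc 1 k).powersetCard l, ∏ i ∈ t, (i : ℝ)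

private lemma Esym_zero (k : ℕ) : Esym k 0 = 1 := by
  simp [Esym]

private lemma Esym_of_lt {k l : ℕ} (h : k < l) : Esym k l = 0 := by
  have : (Finset.Icc 1 k).card < l := by simpa using h
  rw [Esym, Finset.powersetCard_eq_empty.mpr this, Finset.sum_empty]

private lemma Esym_pascal (k l : ℕ) :
    Esym (k + 1) (l + 1) = Esym k (l + 1) + (k + 1 : ℝ) * Esym k l := by
  have hins : Finset.Icc 1 (k + 1) = insert (k + 1) (Finset.Icc 1 k) := by
    ext x
    simp [Finset.mem_Icc, Finset.mem_insert]
    omega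
  have hnot : (k + 1) ∉ Finset.Icc 1 k := by simp
  rw [Esym, hins, Finset.powersetCard_succ_insert hnot,
    Finset.sum_union]
  · congr 1
    rw [Finset.sum_image]
    · rw [Esym, Finset.mul_sum]
      refine Finset.sum_congr rfl fun t ht => ?_
      have htnot : (k + 1) ∉ t := fun hc =>
        hnot ((Finset.mem_powersetCard.mp ht).1 hc)
      rw [Finset.prod_insert htnot]
      push_cast
      ring
    · intro t ht u hu hEq
      have htnot : (k + 1) ∉ t := fun hc =>
        hnot ((Finset.mem_powersetCard.mp ht).1 hc)
      have hunot : (k + 1) ∉ u := fun hc =>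
        hnot ((Finset.mem_powersetCard.mp hu).1 hc)
      have := congrArg (fun s => Finset.erase s (k + 1)) hEq
      simpa [Finset.erase_insert htnot, Finset.erase_insert hunot] using this
  · rw [Finset.disjoint_right]
    intro t ht ht'
    obtain ⟨u, hu, rfl⟩ := Finset.mem_image.mp ht
    exact hnot ((Finset.mem_powersetCard.mp ht').1 (Finset.mem_insert_self _ _))

private lemma key (c : ℕ × ℕ → ℝ)
    (hrec : ∀ k j : ℕ, 1 ≤ k → k ≤ j →
      c (k, j) = c (k - 1, j) + (k : ℝ) * c (k - 1, j - 1)) :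
    ∀ k n : ℕ, k ≤ n →
      c (k, n) = ∑ l ∈ Finset.range (k + 1), Esym k l * c (0, n - l) := by
  intro k
  induction k with
  | zero => intro n _; simp [Esym_zero]
  | succ k ih =>
    intro n hkn
    have h1 : c (k + 1, n) = c (k, n) + ((k : ℝ) + 1) * c (k, n - 1) := by
      have := hrec (k + 1) n (Nat.succ_le_succ (Nat.zero_le k)) hkn
      simpa using this
    have hA := ih n (Nat.le_of_succ_le hkn)
    have hB := ih (n - 1) (by omega)
    rw [h1, hA, hB]
    -- rewrite RHS
    rw [Finset.sum_range_succ' (fun l => Esym (k + 1) l * c (0, n - l))]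
    simp only [Esym_pascal, Esym_zero, Nat.sub_zero, one_mul]
    -- rewrite LHS pieces
    rw [Finset.sum_range_succ' (fun l => Esym k l * c (0, n - l)), Esym_zero, one_mul,
      Nat.sub_zero]
    have hsub : ∀ l, n - 1 - l = n - (l + 1) := by intro l; omega
    rw [Finset.mul_sum]
    have hB' : ∑ l ∈ Finset.range (k + 1), ((k : ℝ) + 1) * (Esym k l * c (0, n - 1 - l))
        = ∑ l ∈ Finset.range (k + 1), ((k : ℝ) + 1) * Esym k l * c (0, n - (l + 1)) := by
      refine Finset.sum_congr rfl fun l _ => by rw [hsub]; ring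
    rw [hB']
    have hk1 : Esym k (k + 1) = 0 := Esym_of_lt (Nat.lt_succ_self k)
    have hA' : ∑ l ∈ Finset.range k, Esym k (l + 1) * c (0, n - (l + 1))
        = ∑ l ∈ Finset.range (k + 1), Esym k (l + 1) * c (0, n - (l + 1)) := by
      rw [Finset.sum_range_succ, hk1, zero_mul, add_zero]
    rw [hA', add_right_comm]
    congr 1
    rw [← Finset.sum_add_distrib]
    refine Finset.sum_congr rfl fun l _ => by ring

/-- A double sequence satisfying the deletion–restriction recurrence
`c(k,j) = c(k-1,j) + k·c(k-1,j-1)` for `1 ≤ k ≤ j` satisfies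
`c(n,n) = ∑_{l=0}^n e_l(1,…,n)·c(0,n-l)`, where `e_l(1,…,n)` is the `l`-th elementary
symmetric polynomial evaluated at `(1,…,n)`. -/
theorem recurrence_elementary_symmetric (c : ℕ × ℕ → ℝ)
    (hrec : ∀ k j : ℕ, 1 ≤ k → k ≤ j →
      c (k, j) = c (k - 1, j) + (k : ℝ) * c (k - 1, j - 1)) :
    ∀ n : ℕ, c (n, n) = ∑ l ∈ Finset.range (n + 1),
      (∑ t ∈ (Finset.Icc 1 n).powersetCard l, ∏ k ∈ t, (k : ℝ)) * c (0, n - l) := by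
  intro n
  exact key c hrec n n le_rfl
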